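/- Let T be the weighted shift on l² with positive weights (a_j). If both T and its Aluthge transform Δ(T) (the weighted shift with weights sqrt(a_j a_{j+1})) are 2-isometries, then T is an isometry (a_j = 1 for all j); in particular T = Δ(T) = M(T). -/

import Mathlib

noncomputable section

/-- The Hilbert space `ℓ²(ℕ, ℂ)`. -/
abbrev Ell2 := lp (fun _ : ℕ => ℂ) 2

/-- The canonical orthonormal basis of `ℓ²` (indexed from `0`; the paper's index `j ≥ 1`
corresponds to our index `j - 1`). -/
noncomputable def e (j : ℕ) : Ell2 := lp.single 2 j 1

/-- `T` is an `m`-isometry: `∑_{k=0}^m (-1)^k C(m,k) ‖T^k x‖² = 0` for all `x`. -/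
def IsMIsometry (T : Ell2 →L[ℂ] Ell2) (m : ℕ) : Prop :=
  ∀ x : Ell2,
    ∑ k ∈ Finset.range (m + 1), (-1 : ℝ) ^ k * (m.choose k : ℝ) * ‖(T ^ k) x‖ ^ 2 = 0

lemma norm_e (j : ℕ) : ‖e j‖ = 1 := by
  have := lp.norm_single (p := 2) (E := fun _ : ℕ => ℂ) (by norm_num) j (1 : ℂ)
  simpa [e] using this

lemma orthonormal_e : Orthonormal ℂ e := by
  rw [orthonormal_iff_ite]
  intro i j
  rw [e, e, lp.inner_single_left]
  simp [lp.single_apply, Pi.single_apply, eq_comm]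

lemma dense_span_e : Dense (Submodule.span ℂ (Set.range e) : Set Ell2) := by
  intro f
  have hs : HasSum (fun i : ℕ => lp.single (E := fun _ : ℕ => ℂ) 2 i (f i)) f :=
    lp.hasSum_single (by norm_num) f
  refine mem_closure_of_tendsto hs ?_
  filter_upwards with s
  refine Submodule.sum_mem _ fun i _ => ?_
  have : lp.single (E := fun _ : ℕ => ℂ) 2 i (f i) = f i • e i := by
    rw [e, ← lp.single_smul]
    norm_num
  rw [this]
  exact Submodule.smul_mem _ _ (Submodule.subset_span ⟨i, rfl⟩)

lemma shift_rel (v : ℕ → ℝ) (hv : ∀ j, 0 ≤ v j) (T : Ell2 →L[ℂ] Ell2)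
    (hT : ∀ j, T (e j) = ((v j : ℝ) : ℂ) • e (j + 1)) (h2 : IsMIsometry T 2) (j : ℕ) :
    1 - 2 * v j ^ 2 + v j ^ 2 * v (j + 1) ^ 2 = 0 := by
  have h1 : ‖(T ^ 1) (e j)‖ = v j := by
    rw [pow_one, hT, norm_smul, norm_e]
    simp [abs_of_nonneg (hv j)]
  have h2' : ‖(T ^ 2) (e j)‖ = v j * v (j + 1) := by
    have : (T ^ 2) (e j) = T (T (e j)) := by
      rw [pow_succ, pow_one]; rfl
    rw [this, hT, map_smul, hT, smul_smul, norm_smul, norm_e]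
    simp [abs_of_nonneg (hv j), abs_of_nonneg (hv (j+1)), abs_of_nonneg
      (mul_nonneg (hv j) (hv (j+1)))]
  have key := h2 (e j)
  simp only [Finset.sum_range_succ, Finset.sum_range_zero] at key
  rw [h1, h2'] at key
  simp only [pow_zero, ContinuousLinearMap.one_apply, norm_e] at key
  norm_num at key
  nlinarith [key]

lemma closed_form (t : ℕ → ℝ) (hrec : ∀ n, 1 - 2 * t n + t n * t (n + 1) = 0) :
    ∀ n : ℕ, t n * (n * (t 0 - 1) + 1) = ((n : ℝ) + 1) * (t 0 - 1) + 1 := by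
  intro n
  induction n with
  | zero => push_cast; ring
  | succ n ih =>
      push_cast
      push_cast at ih
      linear_combination (2 - t (n + 1)) * ih + ((n : ℝ) * (t 0 - 1) + 1) * (hrec n)

lemma weights_eq_one (w : ℕ → ℝ) (hw : ∀ j, 0 < w j)
    (hrx : ∀ j, 1 - 2 * w j ^ 2 + w j ^ 2 * w (j + 1) ^ 2 = 0)
    (hru : ∀ j, 1 - 2 * (w j * w (j + 1)) +
      (w j * w (j + 1)) * (w (j + 1) * w (j + 2)) = 0) :
    ∀ j, w j = 1 := by
  have hX := closed_form (fun n => w n ^ 2) (fun n => by simpa using hrx n)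
  have hU := closed_form (fun n => w n * w (n + 1)) (fun n => by simpa using hru n)
  have h1 := hX 1
  have h2 := hX 2
  have hu1 := hU 1
  push_cast at h1 h2 hu1
  -- h1 : w 1 ^ 2 * (1 * (w 0 ^ 2 - 1) + 1) = (1 + 1) * (w 0 ^ 2 - 1) + 1
  have E0 : (w 0 * w 1) ^ 2 = 2 * w 0 ^ 2 - 1 := by linear_combination h1
  have E1 : (2 * (w 0 * w 1) - 1) ^ 2 * w 0 ^ 2 =
      (w 0 * w 1) ^ 2 * (3 * w 0 ^ 2 - 2) := by
    linear_combination (w 0 * w 1) ^ 2 * h2 + (w 0 * w 1) ^ 2 * (w 2) ^ 2 * h1 -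
      (w 0 ^ 2) * (2 * (w 0 * w 1) - 1 + w 1 * w 2 * (w 0 * w 1)) * hu1
  have b4 : (w 0 * w 1 - 1) ^ 4 = 0 := by
    linear_combination 2 * E1 +
      ((w 0 * w 1 - 1) ^ 2 - 2 * (w 0 * w 1 - 1) - 2) * E0
  have hb : w 0 * w 1 - 1 = 0 := by
    exact pow_eq_zero_iff (n := 4) (by norm_num) |>.mp b4
  have ha : w 0 ^ 2 = 1 := by nlinarith [E0, hb]
  intro j
  have hx := hX j
  rw [ha] at hx
  have hx2 : (w j - 1) * (w j + 1) = 0 := by linear_combination hx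
  rcases mul_eq_zero.mp hx2 with h | h
  · linarith
  · linarith [hw j]


/-- if a weighted shift `T` with positive weights `(a_j)` and its Aluthge
transform `Δ(T)` (the weighted shift with weights `√(a_j a_{j+1})`) are both `2`-isometries,
then `T` is an isometry, i.e. `a_j = 1` for all `j`; in particular `T = Δ(T) = M(T)`,
where `M(T)` is the mean transform (the weighted shift with weights `(a_j + a_{j+1})/2`). -/
theorem two_isometry_with_two_isometric_aluthge_is_isometry
    (w : ℕ → ℝ) (hw : ∀ j, 0 < w j)
    (T D M : Ell2 →L[ℂ] Ell2)
    (hT : ∀ j, T (e j) = ((w j : ℝ) : ℂ) • e (j + 1))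
    (hD : ∀ j, D (e j) = ((Real.sqrt (w j * w (j + 1)) : ℝ) : ℂ) • e (j + 1))
    (hM : ∀ j, M (e j) = (((w j + w (j + 1)) / 2 : ℝ) : ℂ) • e (j + 1))
    (h2T : IsMIsometry T 2) (h2D : IsMIsometry D 2) :
    (∀ x : Ell2, ‖T x‖ = ‖x‖) ∧ (∀ j, w j = 1) ∧ T = D ∧ T = M := by
  have hrx : ∀ j, 1 - 2 * w j ^ 2 + w j ^ 2 * w (j + 1) ^ 2 = 0 :=
    shift_rel w (fun j => (hw j).le) T hT h2T
  have hrs := shift_rel (fun j => Real.sqrt (w j * w (j + 1)))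
    (fun j => Real.sqrt_nonneg _) D hD h2D
  have hru : ∀ j, 1 - 2 * (w j * w (j + 1)) +
      (w j * w (j + 1)) * (w (j + 1) * w (j + 2)) = 0 := by
    intro j
    have h := hrs j
    simp only [Real.sq_sqrt (mul_nonneg (hw j).le (hw (j+1)).le),
      Real.sq_sqrt (mul_nonneg (hw (j+1)).le (hw (j+2)).le)] at h
    exact h
  have hw1 : ∀ j, w j = 1 := weights_eq_one w hw hrx hru
  have hT1 : ∀ j, T (e j) = e (j + 1) := fun j => by rw [hT j, hw1 j]; simp
  refine ⟨?_, hw1, ?_, ?_⟩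
  · have o2 : Orthonormal ℂ (fun i : ℕ => e (i + 1)) :=
      orthonormal_e.comp (fun i => i + 1) (fun a b h => by simpa using h)
    have heq : (fun x : Ell2 => ‖T x‖) = fun x => ‖x‖ := by
      refine Continuous.ext_on dense_span_e
        (continuous_norm.comp T.continuous) continuous_norm ?_
      intro x hx
      obtain ⟨c, rfl⟩ := Finsupp.mem_span_range_iff_exists_finsupp.mp hx
      show ‖T (c.sum fun i a => a • e i)‖ = ‖c.sum fun i a => a • e i‖
      rw [Finsupp.sum]
      have hmap : T (∑ i ∈ c.support, c i • e i) = ∑ i ∈ c.support, c i • e (i + 1) := by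
        rw [map_sum]
        exact Finset.sum_congr rfl fun i _ => by rw [map_smul, hT1]
      rw [hmap, norm_eq_sqrt_re_inner (𝕜 := ℂ), norm_eq_sqrt_re_inner (𝕜 := ℂ)
        (∑ i ∈ c.support, c i • e i), o2.inner_sum, orthonormal_e.inner_sum]
    exact fun x => congrFun heq x
  · refine ContinuousLinearMap.ext_on dense_span_e ?_
    rintro x ⟨j, rfl⟩
    show T (e j) = D (e j)
    rw [hT1 j, hD j, hw1 j, hw1 (j + 1)]
    norm_num
  · refine ContinuousLinearMap.ext_on dense_span_e ?_
    rintro x ⟨j, rfl⟩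
    show T (e j) = M (e j)
    rw [hT1 j, hM j, hw1 j, hw1 (j + 1)]
    norm_num
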